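/- arXiv:0708.1929 — 3 statements merged into one kernel-verified Lean document; each statement's English description precedes it below -/
import Mathlib

section
/- Let Z be a real random variable with mean 0 and variance σ² ∈ (0,∞), strictly increasing continuous distribution function F, and let λ : (0,1) → ℝ be bounded, strictly increasing, and satisfy λ(s) = −λ(1−s). Then σ²·E[λ(F(Z))²] − (E[Z·λ(F(Z))])² > 0, i.e., the inequality σ²J̃ ≥ K̃² is strict. -/
open MeasureTheory

/-- If the complement of a set is null in a probability measure, the set has measure 1. -/
lemma aux_meas_one {Ω : Type*} [MeasurableSpace Ω] {μ : Measure Ω} [IsProbabilityMeasure μ]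
    {s : Set Ω} (h : μ sᶜ = 0) : μ s = 1 := by
  refine le_antisymm prob_le_one ?_
  calc (1 : ENNReal) = μ Set.univ := (measure_univ).symm
    _ = μ (s ∪ sᶜ) := by rw [Set.union_compl_self]
    _ ≤ μ s + μ sᶜ := measure_union_le _ _
    _ = μ s := by rw [h, add_zero]

theorem stmt1 {Ω : Type*} [MeasurableSpace Ω] (μ : Measure Ω) [IsProbabilityMeasure μ]
    (Z : Ω → ℝ) (σ2 : ℝ) (F lam : ℝ → ℝ)
    (hZmeas : Measurable Z)
    (hZ2 : Integrable (fun ω => (Z ω)^2) μ)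
    (hmean : ∫ ω, Z ω ∂μ = 0)
    (hvar : ∫ ω, (Z ω)^2 ∂μ = σ2)
    (hσ2 : 0 < σ2)
    (hF : ∀ x, F x = (μ {ω | Z ω ≤ x}).toReal)
    (hFmono : StrictMono F) (hFcont : Continuous F)
    (hlam_mono : StrictMonoOn lam (Set.Ioo (0:ℝ) 1))
    (hlam_odd : ∀ s ∈ Set.Ioo (0:ℝ) 1, lam s = -lam (1 - s))
    (hlam_bdd : ∃ C, ∀ s ∈ Set.Ioo (0:ℝ) 1, |lam s| ≤ C) :
    0 < σ2 * (∫ ω, (lam (F (Z ω)))^2 ∂μ) - (∫ ω, Z ω * lam (F (Z ω)) ∂μ)^2 := by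
  obtain ⟨C, hC⟩ := hlam_bdd
  set G : ℝ → ℝ := fun x => lam (F x) with hGdef
  -- F takes values in (0,1)
  have hFnn : ∀ y, 0 ≤ F y := fun y => by rw [hF]; exact ENNReal.toReal_nonneg
  have hFle1 : ∀ y, F y ≤ 1 := by
    intro y
    rw [hF]
    have h1 : μ {ω | Z ω ≤ y} ≤ 1 := prob_le_one
    calc (μ {ω | Z ω ≤ y}).toReal ≤ (1 : ENNReal).toReal :=
          ENNReal.toReal_mono (by norm_num) h1
      _ = 1 := by simp
  have hF01 : ∀ x, F x ∈ Set.Ioo (0:ℝ) 1 := by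
    intro x
    constructor
    · exact lt_of_le_of_lt (hFnn (x - 1)) (hFmono (by linarith))
    · exact lt_of_lt_of_le (hFmono (show x < x + 1 by linarith)) (hFle1 (x + 1))
  -- G is strictly monotone, measurable, bounded
  have hGmono : StrictMono G := fun x y hxy =>
    hlam_mono (hF01 x) (hF01 y) (hFmono hxy)
  have hGbdd : ∀ x, |G x| ≤ C := fun x => hC _ (hF01 x)
  have hC0 : 0 ≤ C := le_trans (abs_nonneg _) (hGbdd 0)
  have hGmeas : Measurable G := hGmono.monotone.measurable
  have hGZmeas : Measurable fun ω => G (Z ω) := hGmeas.comp hZmeas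
  -- integrability facts
  have hGZint : Integrable (fun ω => G (Z ω)) μ := by
    refine (integrable_const C).mono' hGZmeas.aestronglyMeasurable ?_
    exact Filter.Eventually.of_forall fun ω => hGbdd _
  have hGZ2int : Integrable (fun ω => (G (Z ω))^2) μ := by
    refine (integrable_const (C^2)).mono' (hGZmeas.pow_const 2).aestronglyMeasurable ?_
    refine Filter.Eventually.of_forall fun ω => ?_
    have := hGbdd (Z ω)
    calc ‖(G (Z ω))^2‖ = |G (Z ω)|^2 := by rw [Real.norm_eq_abs, abs_pow]
      _ ≤ C^2 := by nlinarith [abs_nonneg (G (Z ω))]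
  have hZint : Integrable Z μ := by
    have h : Integrable (fun ω => ((Z ω)^2 + 1)/2) μ := (hZ2.add (integrable_const 1)).div_const 2
    refine h.mono' hZmeas.aestronglyMeasurable ?_
    refine Filter.Eventually.of_forall fun ω => ?_
    have h1 : (0:ℝ) ≤ (|Z ω| - 1)^2 := sq_nonneg _
    have h2 : |Z ω|^2 = (Z ω)^2 := sq_abs _
    rw [Real.norm_eq_abs]
    nlinarith
  have hZGint : Integrable (fun ω => Z ω * G (Z ω)) μ := by
    have h : Integrable (fun ω => C * |Z ω|) μ := hZint.abs.const_mul C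
    refine h.mono' (hZmeas.mul hGZmeas).aestronglyMeasurable ?_
    refine Filter.Eventually.of_forall fun ω => ?_
    rw [Real.norm_eq_abs, abs_mul, mul_comm]
    exact mul_le_mul_of_nonneg_right (hGbdd (Z ω)) (abs_nonneg _)
  set J : ℝ := ∫ ω, (G (Z ω))^2 ∂μ with hJ
  set K : ℝ := ∫ ω, Z ω * G (Z ω) ∂μ with hK
  -- quadratic expansion
  have hQint : ∀ t : ℝ, Integrable (fun ω => (t * Z ω - G (Z ω))^2) μ := by
    intro t
    have heq : (fun ω => (t * Z ω - G (Z ω))^2)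
        = fun ω => (t^2 * (Z ω)^2 - (2*t) * (Z ω * G (Z ω))) + (G (Z ω))^2 :=
      funext fun ω => by ring
    have h1 : Integrable (fun ω => t^2 * (Z ω)^2 - (2*t) * (Z ω * G (Z ω))) μ :=
      (hZ2.const_mul _).sub (hZGint.const_mul _)
    rw [heq]
    exact h1.add hGZ2int
  have hexp : ∀ t : ℝ, ∫ ω, (t * Z ω - G (Z ω))^2 ∂μ = t^2 * σ2 - 2*t*K + J := by
    intro t
    have heq : (fun ω => (t * Z ω - G (Z ω))^2)
        = fun ω => (t^2 * (Z ω)^2 - (2*t) * (Z ω * G (Z ω))) + (G (Z ω))^2 :=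
      funext fun ω => by ring
    have h1 : Integrable (fun ω => t^2 * (Z ω)^2 - (2*t) * (Z ω * G (Z ω))) μ :=
      (hZ2.const_mul _).sub (hZGint.const_mul _)
    rw [heq, integral_add h1 hGZ2int,
      integral_sub (hZ2.const_mul _) (hZGint.const_mul _),
      integral_const_mul, integral_const_mul, hvar, ← hJ, ← hK]
  have hQnn : ∀ t : ℝ, 0 ≤ t^2 * σ2 - 2*t*K + J := by
    intro t
    rw [← hexp t]
    exact integral_nonneg fun ω => sq_nonneg _
  -- Cauchy–Schwarz: σ2 * J - K^2 ≥ 0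
  have hσ2' : σ2 ≠ 0 := ne_of_gt hσ2
  have hCS : 0 ≤ σ2 * J - K^2 := by
    have h := hQnn (K / σ2)
    have heq : (K/σ2)^2 * σ2 - 2*(K/σ2)*K + J = (σ2 * J - K^2) / σ2 := by
      field_simp; ring
    rw [heq] at h
    have h2 := mul_nonneg h hσ2.le
    rwa [div_mul_cancel₀ _ hσ2'] at h2
  -- suppose for contradiction equality holds
  by_contra hcon
  push_neg at hcon
  have heq : σ2 * J - K^2 = 0 := le_antisymm hcon hCS
  set t0 : ℝ := K / σ2 with ht0
  have hQ0 : ∫ ω, (t0 * Z ω - G (Z ω))^2 ∂μ = 0 := by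
    rw [hexp t0, ht0]
    field_simp
    nlinarith [heq]
  have hae : (fun ω => (t0 * Z ω - G (Z ω))^2) =ᵐ[μ] 0 := by
    rw [← integral_eq_zero_iff_of_nonneg (fun ω => sq_nonneg _) (hQint t0)]
    exact hQ0
  have hae' : ∀ᵐ ω ∂μ, G (Z ω) = t0 * Z ω := by
    filter_upwards [hae] with ω hω
    have : (t0 * Z ω - G (Z ω))^2 = 0 := hω
    have := pow_eq_zero_iff (n := 2) (by norm_num) |>.mp this
    linarith [this]
  by_cases ht : t0 = 0
  · -- then G ∘ Z = 0 a.e., forcing Z to be a.s. constant, contradicting F strictly increasing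
    have hae0 : ∀ᵐ ω ∂μ, G (Z ω) = 0 := by
      filter_upwards [hae'] with ω hω
      rw [hω, ht, zero_mul]
    have hnull : μ {ω | ¬ G (Z ω) = 0} = 0 := hae0
    have hone : μ {ω | G (Z ω) = 0} = 1 := by
      apply aux_meas_one
      convert hnull using 2
      rfl
    have hne : {ω | G (Z ω) = 0}.Nonempty := by
      by_contra hemp
      rw [Set.not_nonempty_iff_eq_empty] at hemp
      rw [hemp] at hone
      simp at hone
    obtain ⟨ω0, hω0⟩ := hne
    set x0 := Z ω0 with hx0
    have hsub : {ω | G (Z ω) = 0} ⊆ {ω | Z ω = x0} := by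
      intro ω hω
      have : G (Z ω) = G x0 := by
        rw [hω]; exact (hω0 : G (Z ω0) = 0).symm
      exact hGmono.injective this
    have hone' : μ {ω | Z ω = x0} = 1 :=
      le_antisymm prob_le_one (hone ▸ measure_mono hsub)
    have hmeasset : MeasurableSet {ω | Z ω = x0} := hZmeas (measurableSet_singleton x0)
    have hcompl : μ {ω | Z ω = x0}ᶜ = 0 := by
      rw [measure_compl hmeasset (measure_ne_top μ _), hone', measure_univ, tsub_self]
    have hsub2 : {ω | Z ω ≤ x0 - 1} ⊆ {ω | Z ω = x0}ᶜ := by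
      intro ω hω
      simp only [Set.mem_compl_iff, Set.mem_setOf_eq] at *
      intro h
      rw [h] at hω
      linarith
    have hF0 : F (x0 - 1) = 0 := by
      rw [hF]
      have : μ {ω | Z ω ≤ x0 - 1} = 0 :=
        le_antisymm (hcompl ▸ measure_mono hsub2) zero_le
      rw [this]; simp
    have := (hF01 (x0 - 1)).1
    linarith
  · -- then Z is a.s. bounded, contradicting F < 1 everywhere
    set M : ℝ := C / |t0| with hM
    have haebd : ∀ᵐ ω ∂μ, Z ω ≤ M := by
      filter_upwards [hae'] with ω hω
      have h1 : |t0| * |Z ω| = |G (Z ω)| := by rw [hω, abs_mul]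
      have h2 : |t0| * |Z ω| ≤ C := h1 ▸ hGbdd (Z ω)
      have ht0pos : 0 < |t0| := abs_pos.mpr ht
      have h3 : |Z ω| ≤ M := by
        rw [hM, le_div_iff₀ ht0pos]
        linarith [h2]
      exact le_trans (le_abs_self _) h3
    have hnull : μ {ω | ¬ Z ω ≤ M} = 0 := haebd
    have hone : μ {ω | Z ω ≤ M} = 1 := by
      apply aux_meas_one
      convert hnull using 2
      rfl
    have hFM : F M = 1 := by rw [hF, hone]; simp
    have h1 : F M < F (M + 1) := hFmono (by linarith)
    have h2 : F (M + 1) ≤ 1 := hFle1 _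
    linarith
end

section
/- Let Z ~ N(0, σ²) with density f and distribution function F, and let λ : (0,1) → ℝ be continuously differentiable and bounded with bounded derivative. Then σ² ∫₀¹ f(F⁻¹(s)) λ'(s) ds = ∫₀¹ F⁻¹(s) λ(s) ds, i.e., σ²L̃ = K̃. -/
open MeasureTheory Set Filter

theorem stmt4 (σ : ℝ) (hσ : 0 < σ) (f F Finv lam : ℝ → ℝ)
    (hf : ∀ x, f x = (Real.sqrt (2 * Real.pi * σ^2))⁻¹ * Real.exp (-(x^2) / (2 * σ^2)))
    (hF : ∀ x, F x = ∫ t in Set.Iic x, f t)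
    (hFinv : ∀ s ∈ Set.Ioo (0:ℝ) 1, F (Finv s) = s)
    (hlamC1 : ContDiff ℝ 1 lam)
    (hlam_bdd : ∃ C, ∀ s, |lam s| ≤ C)
    (hlam'_bdd : ∃ C, ∀ s, |deriv lam s| ≤ C) :
    σ^2 * ∫ s in Set.Ioo (0:ℝ) 1, f (Finv s) * deriv lam s
      = ∫ s in Set.Ioo (0:ℝ) 1, Finv s * lam s := by
  have hσ2 : (0:ℝ) < σ^2 := by positivity
  have hπσ : (0:ℝ) < 2 * Real.pi * σ^2 := by positivity
  set c : ℝ := (Real.sqrt (2 * Real.pi * σ^2))⁻¹ with hc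
  have hcpos : 0 < c := by
    rw [hc]; exact inv_pos.mpr (Real.sqrt_pos.mpr hπσ)
  set b : ℝ := (2*σ^2)⁻¹ with hb
  have hbpos : 0 < b := by rw [hb]; positivity
  have hfe : f = fun x => c * Real.exp (-b * x^2) := by
    funext x; rw [hf x]; congr 1; rw [hb]; field_simp
  have hfpos : ∀ x, 0 < f x := fun x => by rw [hfe]; positivity
  have hfcont : Continuous f := by rw [hfe]; fun_prop
  have hfint : Integrable f := by
    rw [hfe]; exact (integrable_exp_neg_mul_sq hbpos).const_mul c
  have hfle : ∀ x, f x ≤ c := by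
    intro x
    have hx : f x = c * Real.exp (-b * x^2) := by rw [hfe]
    have h1 : Real.exp (-b * x^2) ≤ 1 := by
      rw [Real.exp_le_one_iff]; nlinarith [sq_nonneg x]
    nlinarith
  -- integrability of x * f x
  have hxf : Integrable (fun x => x * f x) := by
    have h1 : Integrable (fun x : ℝ => x ^ (1:ℝ) * Real.exp (-b * x^2)) :=
      integrable_rpow_mul_exp_neg_mul_sq hbpos (by norm_num)
    have h2 := h1.const_mul c
    refine h2.congr (Eventually.of_forall fun x => ?_)
    rw [hfe]; simp [Real.rpow_one]; ring
  -- derivative of f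
  have hf' : ∀ x, HasDerivAt f (-(x / σ^2) * f x) x := by
    intro x
    have h1 : HasDerivAt (fun y : ℝ => -b * y^2) (-b * (2*x)) x := by
      have := (hasDerivAt_pow 2 x).const_mul (-b)
      exact this.congr_deriv (by push_cast; ring)
    have h2 := h1.exp.const_mul c
    have hx : f x = c * Real.exp (-b * x^2) := by rw [hfe]
    rw [hfe]
    refine h2.congr_deriv ?_
    show c * (Real.exp (-b * x^2) * (-b * (2*x))) = -(x / σ^2) * (c * Real.exp (-b * x^2))
    rw [hb]; field_simp
  -- derivative of F
  have hFderiv : ∀ x, HasDerivAt F (f x) x := by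
    have hkey : F = fun x => F 0 + ∫ t in (0:ℝ)..x, f t := by
      funext x
      rw [hF x, hF 0, ← intervalIntegral.integral_Iic_sub_Iic hfint.integrableOn
        hfint.integrableOn]
      ring
    intro x
    have h1 : HasDerivAt (fun u => ∫ t in (0:ℝ)..u, f t) (f x) x :=
      intervalIntegral.integral_hasDerivAt_right (hfint.intervalIntegrable)
        (hfcont.stronglyMeasurable.stronglyMeasurableAtFilter)
        hfcont.continuousAt
    rw [hkey]
    exact h1.const_add (F 0)
  have FDiff : Differentiable ℝ F := fun x => (hFderiv x).differentiableAt
  have Fcont : Continuous F := FDiff.continuous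
  have Fmono : StrictMono F :=
    strictMono_of_deriv_pos fun x => by rw [(hFderiv x).deriv]; exact hfpos x
  -- total mass one
  have hmass : ∫ x, f x = 1 := by
    simp only [hfe]
    rw [integral_const_mul, integral_gaussian]
    rw [hc, hb]
    rw [show Real.pi / (2*σ^2)⁻¹ = 2 * Real.pi * σ^2 by field_simp]
    exact inv_mul_cancel₀ (ne_of_gt (Real.sqrt_pos.mpr hπσ))
  have hsupp : Function.support f = Set.univ :=
    Set.eq_univ_of_forall fun x => (hfpos x).ne'
  have hpos_tail : ∀ s : Set ℝ, MeasurableSet s → volume s = ⊤ → 0 < ∫ x in s, f x := by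
    intro s hs hvol
    rw [setIntegral_pos_iff_support_of_nonneg_ae
      (ae_of_all _ fun x => (hfpos x).le) hfint.integrableOn]
    rw [hsupp, Set.univ_inter, hvol]
    exact ENNReal.zero_lt_top
  have hFIoo : ∀ x, F x ∈ Set.Ioo (0:ℝ) 1 := by
    intro x
    constructor
    · rw [hF x]
      exact hpos_tail _ measurableSet_Iic (by simp [Real.volume_Iic])
    · have hsplit := integral_add_compl (measurableSet_Iic (a := x)) hfint (f := f)
      rw [Set.compl_Iic, hmass] at hsplit
      have h2 : 0 < ∫ t in Set.Ioi x, f t :=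
        hpos_tail _ measurableSet_Ioi (by simp [Real.volume_Ioi])
      rw [hF x]; linarith
  have hrange : Set.range F = Set.Ioo 0 1 := by
    apply Set.Subset.antisymm
    · rintro _ ⟨x, rfl⟩; exact hFIoo x
    · rintro s hs; exact ⟨Finv s, hFinv s hs⟩
  have hleftinv : ∀ x, Finv (F x) = x := fun x =>
    Fmono.injective (hFinv _ (hFIoo x))
  -- change of variables
  have hCOV : ∀ g : ℝ → ℝ, ∫ s in Set.Ioo (0:ℝ) 1, g s = ∫ x, f x * g (F x) := by
    intro g
    have h := integral_image_eq_integral_abs_deriv_smul MeasurableSet.univ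
      (fun x _ => (hFderiv x).hasDerivWithinAt) Fmono.injective.injOn g
    rw [Set.image_univ, hrange] at h
    rw [h, setIntegral_univ]
    exact integral_congr_ae (Eventually.of_forall fun x => by
      simp [smul_eq_mul, abs_of_pos (hfpos x)])
  -- integration by parts data
  obtain ⟨C, hC⟩ := hlam_bdd
  obtain ⟨C', hC'⟩ := hlam'_bdd
  have lamdiff : Differentiable ℝ lam := hlamC1.differentiable one_ne_zero
  have lamcont : Continuous lam := hlamC1.continuous
  have lam'cont : Continuous (deriv lam) := hlamC1.continuous_deriv le_rfl
  have hu : ∀ x, HasDerivAt (fun x => σ^2 * f x) (-x * f x) x := by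
    intro x
    refine ((hf' x).const_mul (σ^2)).congr_deriv ?_
    field_simp
  have hv : ∀ x, HasDerivAt (fun x => lam (F x)) (deriv lam (F x) * f x) x := by
    intro x
    exact ((lamdiff (F x)).hasDerivAt).comp x (hFderiv x)
  have huv' : Integrable (fun x => (σ^2 * f x) * (deriv lam (F x) * f x)) := by
    have hcont : Continuous (fun x => (σ^2 * f x) * (deriv lam (F x) * f x)) := by
      fun_prop
    refine (hfint.const_mul (σ^2 * C' * c)).mono' hcont.aestronglyMeasurable ?_
    refine Eventually.of_forall fun x => ?_
    simp only [Real.norm_eq_abs, abs_mul, abs_of_pos hσ2, abs_of_pos (hfpos x)]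
    have h1 := hC' (F x)
    have h1' := abs_nonneg (deriv lam (F x))
    have h2 := hfle x
    have h3 := (hfpos x).le
    nlinarith [mul_le_mul_of_nonneg_left (mul_le_mul h1 h2 h3 (le_trans h1' h1)) (mul_nonneg hσ2.le h3)]
  have hu'v : Integrable (fun x => (-x * f x) * lam (F x)) := by
    have hcont : Continuous (fun x => (-x * f x) * lam (F x)) := by fun_prop
    refine ((hxf.abs).const_mul C).mono' hcont.aestronglyMeasurable ?_
    refine Eventually.of_forall fun x => ?_
    simp only [Real.norm_eq_abs, abs_mul, abs_neg, neg_mul]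
    have h1 := hC (F x)
    have h4 := abs_nonneg (x * f x)
    have h5 := abs_nonneg (lam (F x))
    have h6 := abs_nonneg x
    nlinarith [mul_le_mul_of_nonneg_left h1 (mul_nonneg (abs_nonneg x) (abs_nonneg (f x)))]
  have huv : Integrable (fun x => (σ^2 * f x) * lam (F x)) := by
    have hcont : Continuous (fun x => (σ^2 * f x) * lam (F x)) := by fun_prop
    refine (hfint.const_mul (σ^2 * C)).mono' hcont.aestronglyMeasurable ?_
    refine Eventually.of_forall fun x => ?_
    simp only [Real.norm_eq_abs, abs_mul, abs_of_pos hσ2, abs_of_pos (hfpos x)]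
    have h1 := hC (F x)
    have h3 := (hfpos x).le
    nlinarith [mul_le_mul_of_nonneg_left h1 (mul_nonneg hσ2.le h3)]
  have hIBP : ∫ x, (σ^2 * f x) * (deriv lam (F x) * f x)
      = - ∫ x, (-x * f x) * lam (F x) :=
    integral_mul_deriv_eq_deriv_mul_of_integrable (fun x _ => hu x) (fun x _ => hv x) huv' hu'v huv
  -- assemble
  rw [hCOV (fun s => f (Finv s) * deriv lam s), hCOV (fun s => Finv s * lam s)]
  simp only [hleftinv]
  rw [← integral_const_mul]
  calc ∫ x, σ^2 * (f x * (f x * deriv lam (F x)))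
      = ∫ x, (σ^2 * f x) * (deriv lam (F x) * f x) :=
        integral_congr_ae (Eventually.of_forall fun x => by ring)
    _ = - ∫ x, (-x * f x) * lam (F x) := hIBP
    _ = ∫ x, -((-x * f x) * lam (F x)) := (integral_neg _).symm
    _ = ∫ x, f x * (x * lam (F x)) :=
        integral_congr_ae (Eventually.of_forall fun x => by ring)
end

section
/- Let λ : (0,1) → ℝ be strictly increasing with λ(s) = −λ(1−s) for all s. For real numbers z₁, …, z_N with ranks R₁, …, R_N (assume the z_t are distinct so ranks are well defined), the dispersion D = ∑_{t=1}^N λ(R_t/(N+1)) z_t satisfies D ≥ 0, and D = 0 if and only if z₁ = z₂ = ⋯ = z_N. -/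
theorem stmt11 (N : ℕ) (lam : ℝ → ℝ)
    (hmono : StrictMonoOn lam (Set.Ioo (0:ℝ) 1))
    (hodd : ∀ s ∈ Set.Ioo (0:ℝ) 1, lam s = -lam (1 - s))
    (z : Fin N → ℝ) (hz : Function.Injective z)
    (R : Equiv.Perm (Fin N)) (hR : ∀ s t, z s < z t ↔ R s < R t) :
    0 ≤ ∑ t : Fin N, lam ((((R t : ℕ) : ℝ) + 1) / (N + 1)) * z t ∧
    ((∑ t : Fin N, lam ((((R t : ℕ) : ℝ) + 1) / (N + 1)) * z t) = 0 ↔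
      ∀ s t, z s = z t) := by
  set c : Fin N → ℝ := fun i => lam ((((i : ℕ) : ℝ) + 1) / (N + 1)) with hc
  set w : Fin N → ℝ := fun i => z (R.symm i) with hw
  have hNpos : (0:ℝ) < (N:ℝ) + 1 := by positivity
  have hmem : ∀ i : Fin N, (((i : ℕ) : ℝ) + 1) / ((N:ℝ) + 1) ∈ Set.Ioo (0:ℝ) 1 := by
    intro i
    constructor
    · positivity
    · rw [div_lt_one hNpos]
      have := i.isLt
      push_cast
      exact_mod_cast (by exact_mod_cast Nat.add_lt_add_right this 1 : ((i:ℕ)+1 : ℕ) < N + 1)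
  have hrevval : ∀ i : Fin N, (((Fin.rev i : ℕ) : ℝ) + 1) = (N:ℝ) - (i:ℕ) := by
    intro i
    have h1 : (Fin.rev i : ℕ) = N - ((i:ℕ) + 1) := Fin.val_rev i
    have h2 : (i:ℕ) + 1 ≤ N := i.isLt
    rw [h1, Nat.cast_sub h2]
    push_cast
    ring
  have hrevarg : ∀ i : Fin N,
      (((Fin.rev i : ℕ) : ℝ) + 1) / ((N:ℝ) + 1)
        = 1 - (((i : ℕ) : ℝ) + 1) / ((N:ℝ) + 1) := by
    intro i
    rw [hrevval i]
    field_simp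
    ring
  have hanti : ∀ i : Fin N, c (Fin.rev i) = -c i := by
    intro i
    have := hodd _ (hmem i)
    simp only [hc, hrevarg i]
    linarith
  have hcmono : StrictMono c := by
    intro i j hij
    apply hmono (hmem i) (hmem j)
    have : ((i:ℕ):ℝ) < ((j:ℕ):ℝ) := by exact_mod_cast hij
    gcongr
  have hwmono : StrictMono w := by
    intro i j hij
    have : R (R.symm i) < R (R.symm j) := by simpa using hij
    exact (hR _ _).mpr this
  have hsum : ∑ t : Fin N, lam ((((R t : ℕ) : ℝ) + 1) / (N + 1)) * z t
      = ∑ i : Fin N, c i * w i := by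
    rw [← Equiv.sum_comp R (fun i => c i * w i)]
    apply Finset.sum_congr rfl
    intro t _
    simp [hc, hw]
  have hsum2 : ∑ i : Fin N, c i * w i
      = ∑ i : Fin N, (-c i) * w (Fin.rev i) := by
    rw [← Fintype.sum_bijective Fin.rev Fin.rev_bijective _ _ (fun i => rfl)]
    apply Finset.sum_congr rfl
    intro i _
    rw [hanti i]
  have hterm : ∀ i : Fin N, 0 ≤ c i * (w i - w (Fin.rev i)) := by
    intro i
    rcases lt_trichotomy i (Fin.rev i) with h | h | h
    · have h1 : c i < c (Fin.rev i) := hcmono h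
      rw [hanti i] at h1
      have h2 : w i < w (Fin.rev i) := hwmono h
      have : c i ≤ 0 := by linarith
      nlinarith
    · have : c i = -c i := by rw [← hanti i, ← h]
      have : c i = 0 := by linarith
      simp [this]
    · have h1 : c (Fin.rev i) < c i := hcmono h
      rw [hanti i] at h1
      have h2 : w (Fin.rev i) < w i := hwmono h
      have : 0 ≤ c i := by linarith
      nlinarith
  have hdbl : (∑ i : Fin N, c i * w i) + (∑ i : Fin N, c i * w i)
      = ∑ i : Fin N, c i * (w i - w (Fin.rev i)) := by
    nth_rewrite 2 [hsum2]
    rw [← Finset.sum_add_distrib]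
    apply Finset.sum_congr rfl
    intro i _
    ring
  have hDnn : 0 ≤ ∑ i : Fin N, c i * w i := by
    have : 0 ≤ ∑ i : Fin N, c i * (w i - w (Fin.rev i)) :=
      Finset.sum_nonneg fun i _ => hterm i
    linarith [hdbl]
  rw [hsum]
  refine ⟨hDnn, ?_, ?_⟩
  · intro hD s t
    by_contra hne
    have hst : s ≠ t := fun h => hne (by rw [h])
    have hN2 : 2 ≤ N := by
      by_contra hlt
      push_neg at hlt
      interval_cases N
      · exact s.elim0
      · exact hst (Subsingleton.elim s t)
    have hall : ∀ i ∈ Finset.univ, c i * (w i - w (Fin.rev i)) = 0 := by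
      rw [← Finset.sum_eq_zero_iff_of_nonneg (fun i _ => hterm i)]
      rw [← hdbl, hD]; ring
    set i0 : Fin N := ⟨0, by omega⟩ with hi0
    set i1 : Fin N := Fin.rev i0 with hi1
    have hi1v : (i1 : ℕ) = N - 1 := by
      simp [hi1, hi0, Fin.val_rev]
    have h01 : i0 < i1 := by
      rw [Fin.lt_def, hi1v]
      simp [hi0]
      omega
    have hci1 : 0 < c i1 := by
      have h1 : c i0 < c i1 := hcmono h01
      have h2 : c i1 = -c i0 := by rw [hi1, hanti i0]
      linarith
    have hwi1 : w i0 < w i1 := hwmono h01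
    have := hall i1 (Finset.mem_univ i1)
    rw [hi1, Fin.rev_rev] at this
    nlinarith
  · intro hall
    have hsub : ∀ i j : Fin N, i = j := fun i j => hz (hall i j)
    apply Finset.sum_eq_zero
    intro i _
    have hrev : Fin.rev i = i := hsub _ _
    have : c i = -c i := by rw [← hanti i, hrev]
    have : c i = 0 := by linarith
    simp [this]
end
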